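/- arXiv:0707.4328 — 5 statements merged into one kernel-verified Lean document; each statement's English description precedes it below -/
import Mathlib

section
/- For all positive integers m and n, ∑_{r_1,…,r_m ≤ n} ∏_{k=1}^{m} C(n-r_k, r_{k+1}) = (2^{m(n+1)} - (√5 - 3)^{m(n+1)}) / ((2^m - (√5-3)^m)(√5 - 1)^{mn}), where r_{m+1} := r_1. -/
open Polynomial Finset

lemma refl_pow (z : ℝ) (d : ℕ) :
    reflect d ((X - C z) ^ d) = (1 - C z * X) ^ d := by
  induction d with
  | zero => simp
  | succ d ih =>
    have h1 : ((X - C z) : ℝ[X]).natDegree ≤ 1 := by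
      simpa using natDegree_sub_le (X : ℝ[X]) (C z)
    have h2 : (((X - C z) : ℝ[X]) ^ d).natDegree ≤ d :=
      le_trans (natDegree_pow_le) (by simpa using Nat.mul_le_mul_left d h1)
    have key : reflect (1 + d) ((X - C z) * (X - C z) ^ d)
        = reflect 1 (X - C z) * reflect d ((X - C z) ^ d) :=
      reflect_mul _ _ h1 h2
    have hr1 : reflect 1 ((X : ℝ[X]) - C z) = 1 - C z * X := by
      rw [sub_eq_add_neg, reflect_add, ← C_neg, ← mul_one (C (-z)), ← pow_zero (X : ℝ[X]),
        reflect_C_mul_X_pow]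
      simp [revAt]
      show 1 - C z * X ^ 1 = 1 - C z * X
      ring
    have e1 : ((X - C z) : ℝ[X]) ^ (d + 1) = (X - C z) * (X - C z) ^ d := by ring
    rw [show d + 1 = 1 + d from by ring, e1] at *
    rw [key, hr1, ih, pow_add, pow_one]

lemma eigen (z₁ z₂ : ℝ) (h1 : z₁ ^ 2 = 1 - z₁) (h2 : z₂ ^ 2 = 1 - z₂)
    (n k : ℕ) (hk : k ≤ n) :
    (reflect n ((X - C z₁) ^ (n - k) * (X - C z₂) ^ k)).comp (1 + X)
      = C ((-z₁) ^ (n - k) * (-z₂) ^ k) * ((X - C z₁) ^ (n - k) * (X - C z₂) ^ k) := by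
  have hd : ∀ z : ℝ, ∀ d : ℕ, (((X - C z) : ℝ[X]) ^ d).natDegree ≤ d := by
    intro z d
    refine le_trans natDegree_pow_le ?_
    have : ((X - C z) : ℝ[X]).natDegree ≤ 1 := by
      simpa using natDegree_sub_le (X : ℝ[X]) (C z)
    simpa using Nat.mul_le_mul_left d this
  have hn : n - k + k = n := Nat.sub_add_cancel hk
  have hrm : reflect n ((X - C z₁) ^ (n - k) * (X - C z₂) ^ k)
      = (1 - C z₁ * X) ^ (n - k) * (1 - C z₂ * X) ^ k := by
    have h := reflect_mul ((X - C z₁) ^ (n - k)) ((X - C z₂) ^ k) (hd z₁ (n - k)) (hd z₂ k)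
    rw [hn] at h
    rw [h, refl_pow, refl_pow]
  rw [hrm]
  simp only [mul_comp, pow_comp, sub_comp, one_comp, C_comp, X_comp]
  have key : ∀ z : ℝ, z ^ 2 = 1 - z → (1 : ℝ[X]) - C z * (1 + X) = C (-z) * (X - C z) := by
    intro z hz
    calc (1 : ℝ[X]) - C z * (1 + X) = C (1 - z) - C z * X := by
          rw [map_sub, C_1]; ring
      _ = C z * C z - C z * X := by rw [← hz, pow_two, map_mul]
      _ = C (-z) * (X - C z) := by rw [map_neg]; ring
  rw [key z₁ h1, key z₂ h2, mul_pow, mul_pow, ← C_pow, ← C_pow, C_mul]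
  ring

lemma coeff_Phi (p : ℝ[X]) (n : ℕ) (hp : p.natDegree ≤ n) (i : ℕ) :
    ((reflect n p).comp (1 + X)).coeff i
      = ∑ j ∈ range (n + 1), ((n - j).choose i : ℝ) * p.coeff j := by
  have hrefl : reflect n p = ∑ t ∈ range (n + 1), C (p.coeff (n - t)) * X ^ t := by
    ext u
    rw [coeff_reflect, finset_sum_coeff]
    simp only [coeff_C_mul, coeff_X_pow, mul_ite, mul_one, mul_zero]
    rw [Finset.sum_ite_eq (range (n + 1)) u fun t => p.coeff (n - t)]
    by_cases hu : u ≤ n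
    · simp [Finset.mem_range, Nat.lt_succ_of_le hu, revAt_le hu]
    · push_neg at hu
      rw [if_neg (by simp; omega)]
      have h1 : revAt n u = u := revAt_eq_self_of_lt hu
      rw [h1, coeff_eq_zero_of_natDegree_lt (lt_of_le_of_lt hp hu)]
  rw [hrefl]
  have hcomp : (∑ t ∈ range (n + 1), C (p.coeff (n - t)) * X ^ t).comp (1 + X)
      = ∑ t ∈ range (n + 1), C (p.coeff (n - t)) * (1 + X) ^ t := by
    simp [comp, eval₂_finset_sum]
  rw [hcomp, finset_sum_coeff]
  have hco : ∀ t, (((1 : ℝ[X]) + X) ^ t).coeff i = (t.choose i : ℝ) := by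
    intro t; exact_mod_cast coeff_one_add_X_pow ℝ t i
  have step : ∀ t ∈ range (n + 1),
      (C (p.coeff (n - t)) * (1 + X) ^ t).coeff i = p.coeff (n - t) * (t.choose i : ℝ) := by
    intro t _; rw [coeff_C_mul, hco]
  rw [Finset.sum_congr rfl step]
  rw [← Finset.sum_range_reflect]
  refine Finset.sum_congr rfl fun j hj => ?_
  rw [Finset.mem_range, Nat.lt_succ_iff] at hj
  rw [show n + 1 - 1 - j = n - j from by omega, show n - (n - j) = j from by omega]
  ring

lemma expand_p (z₁ z₂ : ℝ) (n k : ℕ) (hk : k ≤ n) :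
    ((X - C z₁) ^ (n - k) * (X - C z₂) ^ k : ℝ[X])
      = ∑ t ∈ range (n + 1), C ((k.choose t : ℝ) * (z₁ - z₂) ^ t) * (X - C z₁) ^ (n - t) := by
  have hsplit : ((X : ℝ[X]) - C z₂) = (X - C z₁) + C (z₁ - z₂) := by
    rw [map_sub]; ring
  rw [hsplit, add_pow, Finset.mul_sum]
  have hterm : ∀ j ∈ range (k + 1),
      (X - C z₁) ^ (n - k) * ((X - C z₁) ^ j * C (z₁ - z₂) ^ (k - j) * (k.choose j : ℝ[X]))
      = C ((k.choose j : ℝ) * (z₁ - z₂) ^ (k - j)) * (X - C z₁) ^ (n - k + j) := by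
    intro j hj
    rw [← C_pow, map_mul, pow_add, Polynomial.C_eq_natCast]
    push_cast
    ring
  rw [Finset.sum_congr rfl hterm]
  rw [← Finset.sum_range_reflect]
  have hterm2 : ∀ t ∈ range (k + 1),
      C ((k.choose (k + 1 - 1 - t) : ℝ) * (z₁ - z₂) ^ (k - (k + 1 - 1 - t)))
          * (X - C z₁) ^ (n - k + (k + 1 - 1 - t))
      = C ((k.choose t : ℝ) * (z₁ - z₂) ^ t) * (X - C z₁) ^ (n - t) := by
    intro t ht
    rw [Finset.mem_range, Nat.lt_succ_iff] at ht
    rw [show k + 1 - 1 - t = k - t from by omega, show k - (k - t) = t from by omega,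
      show n - k + (k - t) = n - t from by omega, Nat.choose_symm ht]
  rw [Finset.sum_congr rfl hterm2]
  refine Finset.sum_subset (Finset.range_subset_range.mpr (by omega)) ?_
  intro t _ ht
  rw [Finset.mem_range, Nat.lt_succ_iff, not_le] at ht
  rw [Nat.choose_eq_zero_of_lt ht]
  simp

open Finset

variable {ι : Type*} [Fintype ι] [DecidableEq ι]

def pathProd (M : Matrix ι ι ℝ) : ∀ {m : ℕ}, ι → (Fin m → ι) → ι → ℝ
  | 0, i, _, j => M i j
  | _ + 1, i, t, j => M i (t 0) * pathProd M (t 0) (Fin.tail t) j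

lemma pow_apply_eq_sum (M : Matrix ι ι ℝ) :
    ∀ (m : ℕ) (i j : ι), (M ^ (m + 1)) i j = ∑ t : Fin m → ι, pathProd M i t j := by
  intro m
  induction m with
  | zero =>
    intro i j
    rw [pow_one]
    rw [Fintype.sum_subsingleton _ (fun k : Fin 0 => i)]
    rfl
  | succ m ih =>
    intro i j
    rw [pow_succ', Matrix.mul_apply]
    calc ∑ x, M i x * (M ^ (m + 1)) x j
        = ∑ x, ∑ t : Fin m → ι, M i x * pathProd M x t j := by
          simp_rw [ih, Finset.mul_sum]
      _ = ∑ p : ι × (Fin m → ι), M i p.1 * pathProd M p.1 p.2 j :=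
          (Fintype.sum_prod_type (f := fun p : ι × (Fin m → ι) => M i p.1 * pathProd M p.1 p.2 j)).symm
      _ = ∑ r : Fin (m + 1) → ι, pathProd M i r j := by
          rw [← Equiv.sum_comp (Fin.consEquiv (fun _ : Fin (m + 1) => ι))
            (fun r => pathProd M i r j)]
          refine Finset.sum_congr rfl fun p _ => ?_
          simp only [Fin.consEquiv]
          show M i p.1 * pathProd M p.1 p.2 j = pathProd M i (Fin.cons p.1 p.2) j
          simp [pathProd, Fin.tail_cons]

lemma pathProd_eq (M : Matrix ι ι ℝ) :
    ∀ (m : ℕ) (q : Fin (m + 1) → ι) (j : ι),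
      pathProd M (q 0) (Fin.tail q) j
        = (∏ k : Fin m, M (q k.castSucc) (q k.succ)) * M (q (Fin.last m)) j := by
  intro m
  induction m with
  | zero => intro q j; simp [pathProd, Fin.last]
  | succ m ih =>
    intro q j
    show M (q 0) (Fin.tail q 0) * pathProd M (Fin.tail q 0) (Fin.tail (Fin.tail q)) j = _
    rw [ih (Fin.tail q) j]
    rw [Fin.prod_univ_succ]
    simp only [show ∀ k : Fin (m + 1), Fin.tail q k = q k.succ from fun _ => rfl]
    simp only [Fin.succ_castSucc, Fin.succ_last, Fin.castSucc_zero]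
    ring

lemma trace_pow_cyc (M : Matrix ι ι ℝ) (m : ℕ) (hm : 0 < m) :
    Matrix.trace (M ^ m)
      = ∑ r : Fin m → ι, ∏ k : Fin m, M (r k) (r ⟨((k : ℕ) + 1) % m, Nat.mod_lt _ hm⟩) := by
  obtain ⟨m', rfl⟩ : ∃ m', m = m' + 1 := ⟨m - 1, by omega⟩
  rw [Matrix.trace]
  calc ∑ i, (M ^ (m' + 1)).diag i
      = ∑ i, ∑ t : Fin m' → ι, pathProd M i t i := by
        refine Finset.sum_congr rfl fun i _ => pow_apply_eq_sum M m' i i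
    _ = ∑ p : ι × (Fin m' → ι), pathProd M p.1 p.2 p.1 :=
        (Fintype.sum_prod_type (f := fun p : ι × (Fin m' → ι) => pathProd M p.1 p.2 p.1)).symm
    _ = ∑ r : Fin (m' + 1) → ι, ∏ k : Fin (m' + 1),
          M (r k) (r ⟨((k : ℕ) + 1) % (m' + 1), Nat.mod_lt _ hm⟩) := by
        rw [← Equiv.sum_comp (Fin.consEquiv (fun _ : Fin (m' + 1) => ι))
          (fun r => ∏ k : Fin (m' + 1), M (r k) (r ⟨((k : ℕ) + 1) % (m' + 1), Nat.mod_lt _ hm⟩))]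
        refine Finset.sum_congr rfl fun p _ => ?_
        simp only [Fin.consEquiv, Equiv.coe_fn_mk]
        set q : Fin (m' + 1) → ι := Fin.cons p.1 p.2 with hq
        have h0 : q 0 = p.1 := rfl
        have ht : Fin.tail q = p.2 := Fin.tail_cons _ _
        rw [← h0, ← ht, pathProd_eq M m' q (q 0), Fin.prod_univ_castSucc]
        congr 1
        · refine Finset.prod_congr rfl fun k _ => ?_
          congr 1
          refine congrArg q (Fin.ext ?_)
          simp only [Fin.coe_castSucc, Fin.val_succ]
          rw [Nat.mod_eq_of_lt (by omega)]
        · congr 1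
          refine congrArg q (Fin.ext ?_)
          simp [Fin.last]

set_option maxHeartbeats 1600000 in
open Matrix in
theorem stmt14 (m n : ℕ) (hm : 0 < m) (hn : 0 < n) :
    ∑ r : Fin m → Fin (n + 1), ∏ k : Fin m,
      (((n - (r k : ℕ)).choose (r ⟨((k : ℕ) + 1) % m, Nat.mod_lt _ hm⟩ : ℕ) : ℝ))
    = (2 ^ (m * (n + 1)) - (Real.sqrt 5 - 3) ^ (m * (n + 1))) /
        ((2 ^ m - (Real.sqrt 5 - 3) ^ m) * (Real.sqrt 5 - 1) ^ (m * n)) := by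
  set s : ℝ := Real.sqrt 5 with hs_def
  have hs5 : s ^ 2 = 5 := Real.sq_sqrt (by norm_num)
  have hs2 : 2 < s := by
    rw [hs_def, show (2:ℝ) = Real.sqrt 4 from by
      rw [show (4:ℝ) = 2^2 by norm_num, Real.sqrt_sq (by norm_num)]]
    exact Real.sqrt_lt_sqrt (by norm_num) (by norm_num)
  have hs3 : s < 3 := by
    rw [hs_def, show (3:ℝ) = Real.sqrt 9 from by
      rw [show (9:ℝ) = 3^2 by norm_num, Real.sqrt_sq (by norm_num)]]
    exact Real.sqrt_lt_sqrt (by norm_num) (by norm_num)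
  set z₁ : ℝ := (s - 1) / 2 with hz₁_def
  set z₂ : ℝ := -(1 + s) / 2 with hz₂_def
  have h1 : z₁ ^ 2 = 1 - z₁ := by rw [hz₁_def]; field_simp; nlinarith [hs5]
  have h2 : z₂ ^ 2 = 1 - z₂ := by rw [hz₂_def]; field_simp; nlinarith [hs5]
  -- matrices
  set B : Matrix (Fin (n + 1)) (Fin (n + 1)) ℝ :=
    Matrix.of fun i j => ((n - (i : ℕ)).choose (j : ℕ) : ℝ) with hB_def
  set A : Matrix (Fin (n + 1)) (Fin (n + 1)) ℝ :=
    Matrix.of fun i j => ((n - (j : ℕ)).choose (i : ℕ) : ℝ) with hA_def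
  set p : Fin (n + 1) → ℝ[X] :=
    fun k => (X - C z₁) ^ (n - (k : ℕ)) * (X - C z₂) ^ (k : ℕ) with hp_def
  set lam : Fin (n + 1) → ℝ :=
    fun k => (-z₁) ^ (n - (k : ℕ)) * (-z₂) ^ (k : ℕ) with hlam_def
  set V : Matrix (Fin (n + 1)) (Fin (n + 1)) ℝ :=
    Matrix.of fun i k => (p k).coeff i with hV_def
  have hdeg1 : ∀ z : ℝ, ∀ d : ℕ, (((X - C z) : ℝ[X]) ^ d).natDegree ≤ d := by
    intro z d
    refine le_trans natDegree_pow_le ?_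
    have : ((X - C z) : ℝ[X]).natDegree ≤ 1 := by
      simpa using natDegree_sub_le (X : ℝ[X]) (C z)
    simpa using Nat.mul_le_mul_left d this
  have hpdeg : ∀ k : Fin (n + 1), (p k).natDegree ≤ n := by
    intro k
    refine le_trans natDegree_mul_le ?_
    have := hdeg1 z₁ (n - (k : ℕ))
    have := hdeg1 z₂ (k : ℕ)
    have hk : (k : ℕ) ≤ n := by omega
    omega
  -- eigen relation: A * V = V * diagonal lam
  have hAV : A * V = V * Matrix.diagonal lam := by
    ext i k
    rw [Matrix.mul_apply, Matrix.mul_diagonal]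
    have lhs_eq : ∑ j : Fin (n + 1), A i j * V j k
        = ∑ j ∈ Finset.range (n + 1), ((n - j).choose (i : ℕ) : ℝ) * (p k).coeff j := by
      rw [Finset.sum_range fun j => ((n - j).choose (i : ℕ) : ℝ) * (p k).coeff j]
      rfl
    rw [lhs_eq, ← coeff_Phi (p k) n (hpdeg k) i]
    have hk : (k : ℕ) ≤ n := by omega
    rw [hp_def]
    simp only
    rw [eigen z₁ z₂ h1 h2 n (k : ℕ) hk, coeff_C_mul]
    rw [hV_def, hlam_def, hp_def]
    simp only [Matrix.of_apply]
    ring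
  -- factorization V = W * U and invertibility
  set W : Matrix (Fin (n + 1)) (Fin (n + 1)) ℝ :=
    Matrix.of fun i t => (((X - C z₁) ^ (n - (t : ℕ)) : ℝ[X])).coeff i with hW_def
  set U : Matrix (Fin (n + 1)) (Fin (n + 1)) ℝ :=
    Matrix.of fun t k => (((k : ℕ).choose (t : ℕ) : ℝ) * (z₁ - z₂) ^ (t : ℕ)) with hU_def
  have hVWU : V = W * U := by
    ext i k
    rw [Matrix.mul_apply]
    have hk : (k : ℕ) ≤ n := by omega
    have : (V i k : ℝ) = (p k).coeff i := rfl
    rw [this, hp_def]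
    simp only
    rw [expand_p z₁ z₂ n (k : ℕ) hk, finset_sum_coeff]
    have hfin : ∑ j : Fin (n + 1), W i j * U j k
        = ∑ j ∈ Finset.range (n + 1), ((((X - C z₁) ^ (n - j) : ℝ[X])).coeff (i : ℕ))
            * ((((k : ℕ).choose j : ℝ)) * (z₁ - z₂) ^ j) := by
      exact Fin.sum_univ_eq_sum_range (fun j => ((((X - C z₁) ^ (n - j) : ℝ[X])).coeff (i : ℕ))
        * ((((k : ℕ).choose j : ℝ)) * (z₁ - z₂) ^ j)) (n + 1)
    rw [hfin]

    refine Finset.sum_congr rfl fun t _ => ?_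
    rw [coeff_C_mul]
    ring
  have hz₁₂ : z₁ - z₂ = s := by rw [hz₁_def, hz₂_def]; ring
  have hs0 : s ≠ 0 := ne_of_gt (by nlinarith : (0:ℝ) < s)
  have hdetU : U.det = ∏ t : Fin (n + 1), (z₁ - z₂) ^ (t : ℕ) := by
    have htri : U.BlockTriangular id := by
      intro t k hlt
      simp only [id] at hlt
      have : (k : ℕ) < (t : ℕ) := hlt
      simp only [hU_def, Matrix.of_apply, Nat.choose_eq_zero_of_lt this]
      simp
    rw [Matrix.det_of_upperTriangular htri]
    refine Finset.prod_congr rfl fun t _ => ?_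
    simp [hU_def]
  have hdetU0 : U.det ≠ 0 := by
    rw [hdetU]
    refine Finset.prod_ne_zero_iff.mpr fun t _ => pow_ne_zero _ ?_
    rw [hz₁₂]; exact hs0
  have hdetW0 : W.det ≠ 0 := by
    have hW' : (W.submatrix id Fin.revPerm).det = 1 := by
      have htri : (W.submatrix id Fin.revPerm).BlockTriangular id := by
        intro i t hlt
        simp only [id] at hlt
        have hti : (t : ℕ) < (i : ℕ) := hlt
        simp only [Matrix.submatrix_apply, hW_def, Matrix.of_apply, id]
        have hrev : (n : ℕ) - ((Fin.revPerm t : Fin (n + 1)) : ℕ) = (t : ℕ) := by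
          simp [Fin.revPerm, Fin.rev]
          omega
        rw [hrev]
        exact coeff_eq_zero_of_natDegree_lt (lt_of_le_of_lt (hdeg1 z₁ (t : ℕ)) hti)
      rw [Matrix.det_of_upperTriangular htri]
      refine Finset.prod_eq_one fun i _ => ?_
      simp only [Matrix.submatrix_apply, hW_def, Matrix.of_apply, id]
      have hrev : (n : ℕ) - ((Fin.revPerm i : Fin (n + 1)) : ℕ) = (i : ℕ) := by
        simp [Fin.revPerm, Fin.rev]
        omega
      rw [hrev]
      have hmonic : (((X - C z₁) ^ (i : ℕ) : ℝ[X])).Monic :=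
        (monic_X_sub_C z₁).pow _
      have hdeg : (((X - C z₁) ^ (i : ℕ) : ℝ[X])).natDegree = (i : ℕ) := by
        rw [natDegree_pow, natDegree_X_sub_C, mul_one]
      have hcoe := hmonic.coeff_natDegree
      rw [hdeg] at hcoe
      exact hcoe
    intro hW0
    rw [Matrix.det_permute' Fin.revPerm W, hW0, mul_zero] at hW'
    exact one_ne_zero hW'.symm
  have hdetV0 : IsUnit V.det := by
    rw [hVWU, Matrix.det_mul]
    exact (Ne.isUnit (mul_ne_zero hdetW0 hdetU0))
  -- diagonalization and trace
  have hVi1 : V * V⁻¹ = 1 := Matrix.mul_nonsing_inv V hdetV0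
  have hVi2 : V⁻¹ * V = 1 := Matrix.nonsing_inv_mul V hdetV0
  have hpow : ∀ j : ℕ, A ^ j * V = V * (Matrix.diagonal lam) ^ j := by
    intro j
    induction j with
    | zero => simp
    | succ j ih =>
      calc A ^ (j + 1) * V = A ^ j * (A * V) := by rw [pow_succ, mul_assoc]
        _ = A ^ j * V * Matrix.diagonal lam := by rw [hAV, mul_assoc]
        _ = V * (Matrix.diagonal lam) ^ (j + 1) := by rw [ih, pow_succ, mul_assoc]
  have htrA : Matrix.trace (A ^ m) = ∑ k : Fin (n + 1), (lam k) ^ m := by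
    have hAm : A ^ m = V * (Matrix.diagonal lam) ^ m * V⁻¹ := by
      calc A ^ m = A ^ m * (V * V⁻¹) := by rw [hVi1, mul_one]
        _ = (A ^ m * V) * V⁻¹ := by rw [mul_assoc]
        _ = V * (Matrix.diagonal lam) ^ m * V⁻¹ := by rw [hpow m]
    rw [hAm, Matrix.trace_mul_cycle, hVi2, one_mul,
      Matrix.diagonal_pow, Matrix.trace_diagonal]
    rfl
  -- LHS is trace of B ^ m
  have hL : ∑ r : Fin m → Fin (n + 1), ∏ k : Fin m,
      (((n - (r k : ℕ)).choose (r ⟨((k : ℕ) + 1) % m, Nat.mod_lt _ hm⟩ : ℕ) : ℝ))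
      = Matrix.trace (B ^ m) := (trace_pow_cyc B m hm).symm
  have hBA : Matrix.trace (B ^ m) = Matrix.trace (A ^ m) := by
    rw [← Matrix.trace_transpose (B ^ m), Matrix.transpose_pow]
    have hBT : Bᵀ = A := by ext i j; rfl
    rw [hBT]
  -- evaluate the eigenvalue sum
  set a : ℝ := (-z₁) ^ m with ha_def
  set b : ℝ := (-z₂) ^ m with hb_def
  have hlam_pow : ∀ k : Fin (n + 1), (lam k) ^ m = b ^ (k : ℕ) * a ^ (n - (k : ℕ)) := by
    intro k
    rw [hlam_def, ha_def, hb_def]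
    simp only
    rw [mul_pow, ← pow_mul, ← pow_mul, ← pow_mul, ← pow_mul,
      mul_comm (n - (k : ℕ)) m, mul_comm (k : ℕ) m]
    ring
  have hsum1 : ∑ k : Fin (n + 1), (lam k) ^ m
      = ∑ k ∈ Finset.range (n + 1), b ^ k * a ^ (n - k) := by
    rw [Finset.sum_congr rfl (fun k _ => hlam_pow k)]
    exact Fin.sum_univ_eq_sum_range (fun k => b ^ k * a ^ (n - k)) (n + 1)
  have hgeom : (∑ k ∈ Finset.range (n + 1), b ^ k * a ^ (n - k)) * (b - a)
      = b ^ (n + 1) - a ^ (n + 1) := by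
    simpa using geom_sum₂_mul b a (n + 1)
  have hm0 : m ≠ 0 := by omega
  have hb1 : (1 : ℝ) < b := by
    rw [hb_def]
    refine one_lt_pow₀ ?_ hm0
    rw [hz₂_def]; nlinarith
  have ha1 : a < 1 := by
    rw [ha_def]
    calc (-z₁) ^ m ≤ |(-z₁) ^ m| := le_abs_self _
      _ = |(-z₁)| ^ m := by rw [abs_pow]
      _ < 1 := by
          refine pow_lt_one₀ (abs_nonneg _) ?_ hm0
          rw [hz₁_def, abs_neg, abs_of_nonneg (by nlinarith)]
          nlinarith
  have hba : b - a ≠ 0 := sub_ne_zero.mpr (ne_of_gt (lt_trans ha1 hb1))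
  have hsum2 : ∑ k ∈ Finset.range (n + 1), b ^ k * a ^ (n - k)
      = (b ^ (n + 1) - a ^ (n + 1)) / (b - a) := by
    rw [eq_div_iff hba, hgeom]
  -- identify with the stated RHS
  have hs1 : s - 1 ≠ 0 := sub_ne_zero.mpr (ne_of_gt (by nlinarith : (1:ℝ) < s))
  have key2 : (2 : ℝ) = (s - 1) * (-z₂) := by rw [hz₂_def]; nlinarith
  have key3 : s - 3 = (s - 1) * (-z₁) := by rw [hz₁_def]; nlinarith
  have hnum : (2 : ℝ) ^ (m * (n + 1)) - (s - 3) ^ (m * (n + 1))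
      = (s - 1) ^ (m * (n + 1)) * (b ^ (n + 1) - a ^ (n + 1)) := by
    rw [key2, key3, mul_pow, mul_pow, ha_def, hb_def, ← pow_mul, ← pow_mul]
    ring
  have hden : ((2 : ℝ) ^ m - (s - 3) ^ m) * (s - 1) ^ (m * n)
      = (s - 1) ^ (m * (n + 1)) * (b - a) := by
    rw [key2, key3, mul_pow, mul_pow, ha_def, hb_def,
      show m * (n + 1) = m + m * n from by ring, pow_add]
    ring
  rw [hL, hBA, htrA, hsum1, hsum2, hnum, hden,
    mul_div_mul_left _ _ (pow_ne_zero (m * (n + 1)) hs1)]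
end

section
/- For all nonnegative integers n and elements x, y of a commutative ring, ∑_{k=0}^{⌊n/2⌋} C(n-k, k) (x+y)^{n-2k} (-xy)^k = ∑_{i=0}^{n} x^i y^{n-i} (equivalently (x^{n+1} - y^{n+1})/(x-y)). -/
open Finset

private def Saux {R : Type*} [CommRing R] (a b : R) (n : ℕ) : R :=
  ∑ k ∈ Finset.range (n / 2 + 1), ((n - k).choose k : R) * a ^ (n - 2 * k) * b ^ k

private lemma Saux_rec {R : Type*} [CommRing R] (a b : R) (n : ℕ) :
    Saux a b (n + 2) = a * Saux a b (n + 1) + b * Saux a b n := by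
  unfold Saux
  have h2 : (n + 2) / 2 + 1 = (n / 2 + 1) + 1 := by omega
  rw [h2, Finset.sum_range_succ']
  have e0 : ((n + 2 - 0).choose 0 : R) * a ^ (n + 2 - 2 * 0) * b ^ 0 = a ^ (n + 2) := by simp
  rw [e0]
  -- rewrite the shifted terms using Pascal
  have key : ∀ j ∈ Finset.range (n / 2 + 1),
      ((n + 2 - (j + 1)).choose (j + 1) : R) * a ^ (n + 2 - 2 * (j + 1)) * b ^ (j + 1)
      = (((n - j).choose j : R) * a ^ (n - 2 * j) * b ^ j) * b
        + ((n - j).choose (j + 1) : R) * a ^ (n - 2 * j) * b ^ (j + 1) := by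
    intro j hj
    simp only [Finset.mem_range] at hj
    have h1 : n + 2 - (j + 1) = (n - j) + 1 := by omega
    have h3 : n + 2 - 2 * (j + 1) = n - 2 * j := by omega
    rw [h1, h3, Nat.choose_succ_succ]
    push_cast
    ring
  rw [Finset.sum_congr rfl key, Finset.sum_add_distrib]
  -- first sum is b * Saux a b n
  have hb : ∑ j ∈ Finset.range (n / 2 + 1),
      (((n - j).choose j : R) * a ^ (n - 2 * j) * b ^ j) * b
      = b * ∑ k ∈ Finset.range (n / 2 + 1), ((n - k).choose k : R) * a ^ (n - 2 * k) * b ^ k := by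
    rw [Finset.mul_sum]; exact Finset.sum_congr rfl fun j _ => by ring
  -- second sum (plus a^(n+2)) is a * Saux a b (n+1)
  have ha : ∑ j ∈ Finset.range (n / 2 + 1),
      ((n - j).choose (j + 1) : R) * a ^ (n - 2 * j) * b ^ (j + 1)
      = ∑ j ∈ Finset.range ((n + 1) / 2), ((n - j).choose (j + 1) : R) * a ^ (n - 2 * j) * b ^ (j + 1) := by
    rcases Nat.even_or_odd n with ⟨m, hm⟩ | ⟨m, hm⟩
    · subst hm
      have : (m + m) / 2 + 1 = m + 1 := by omega
      rw [this]
      have : (m + m + 1) / 2 = m := by omega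
      rw [this, Finset.sum_range_succ]
      have hz : (m + m - m).choose (m + 1) = 0 := by
        apply Nat.choose_eq_zero_of_lt; omega
      rw [hz]; push_cast; ring
    · subst hm
      have e1 : (2 * m + 1) / 2 + 1 = m + 1 := by omega
      have e2 : (2 * m + 1 + 1) / 2 = m + 1 := by omega
      rw [e1, e2]
  have ha2 : a * ∑ k ∈ Finset.range ((n + 1) / 2 + 1),
      ((n + 1 - k).choose k : R) * a ^ (n + 1 - 2 * k) * b ^ k
      = (∑ j ∈ Finset.range ((n + 1) / 2), ((n - j).choose (j + 1) : R) * a ^ (n - 2 * j) * b ^ (j + 1))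
        + a ^ (n + 2) := by
    rw [Finset.mul_sum, Finset.sum_range_succ']
    congr 1
    · apply Finset.sum_congr rfl
      intro j hj
      simp only [Finset.mem_range] at hj
      have h1 : n + 1 - (j + 1) = n - j := by omega
      have h3 : n + 1 - 2 * (j + 1) + 1 = n - 2 * j := by omega
      rw [h1, ← h3, pow_succ]
      ring
    · simp [pow_succ]
      ring
  rw [hb, ha, ha2]
  ring

theorem stmt15 {R : Type*} [CommRing R] (n : ℕ) (x y : R) :
    ∑ k ∈ Finset.range (n / 2 + 1),
      ((n - k).choose k : R) * (x + y) ^ (n - 2 * k) * (-(x * y)) ^ k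
    = ∑ i ∈ Finset.range (n + 1), x ^ i * y ^ (n - i) := by
  show Saux (x + y) (-(x * y)) n = _
  induction n using Nat.twoStepInduction with
  | zero => simp [Saux]
  | one => simp [Saux, Finset.sum_range_succ]; ring
  | more n ih1 ih2 =>
    rw [Saux_rec, ih1, ih2]
    -- now prove the h recurrence
    have hpeel : ∑ i ∈ Finset.range (n + 3), x ^ i * y ^ (n + 2 - i)
        = (∑ j ∈ Finset.range (n + 2), x ^ (j + 1) * y ^ (n + 1 - j)) + y ^ (n + 2) := by
      rw [Finset.sum_range_succ']
      congr 1
      · apply Finset.sum_congr rfl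
        intro j hj
        simp only [Finset.mem_range] at hj
        have : n + 2 - (j + 1) = n + 1 - j := by omega
        rw [this]
      · simp
    have hx : (x + y) * ∑ i ∈ Finset.range (n + 2), x ^ i * y ^ (n + 1 - i)
        = (∑ j ∈ Finset.range (n + 2), x ^ (j + 1) * y ^ (n + 1 - j))
          + (y ^ (n + 2) + x * y * ∑ i ∈ Finset.range (n + 1), x ^ i * y ^ (n - i)) := by
      have hy : y * ∑ i ∈ Finset.range (n + 2), x ^ i * y ^ (n + 1 - i)
          = y ^ (n + 2) + x * y * ∑ i ∈ Finset.range (n + 1), x ^ i * y ^ (n - i) := by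
        rw [Finset.mul_sum, Finset.sum_range_succ', Finset.mul_sum]
        have : ∀ j ∈ Finset.range (n + 1),
            y * (x ^ (j + 1) * y ^ (n + 1 - (j + 1))) = x * y * (x ^ j * y ^ (n - j)) := by
          intro j hj
          simp only [Finset.mem_range] at hj
          have h1 : n + 1 - (j + 1) = n - j := by omega
          rw [h1]; ring
        rw [Finset.sum_congr rfl this]
        simp; ring
      rw [add_mul, Finset.mul_sum, hy]
      congr 1
      apply Finset.sum_congr rfl
      intro j _
      ring
    rw [hpeel]
    rw [hx]
    ring
end

section
/- For all positive integers m and n, ∑_{k=0}^{⌊n/2⌋} C(n-k, k) m^k (m+1)^k = (1/(2m+1)) ((m+1)^{n+1} - (-m)^{n+1}), equivalently (2m+1) ∑_{k=0}^{⌊n/2⌋} C(n-k,k) m^k (m+1)^k = (m+1)^{n+1} - (-m)^{n+1}. -/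
open Finset

private def Faux (c : ℤ) (n : ℕ) : ℤ :=
  ∑ k ∈ Finset.range (n + 1), ((n - k).choose k : ℤ) * c ^ k

private lemma Faux_rec (c : ℤ) (n : ℕ) :
    Faux c (n + 2) = Faux c (n + 1) + c * Faux c n := by
  unfold Faux
  have e1 : ∑ k ∈ Finset.range (n + 2 + 1), ((n + 2 - k).choose k : ℤ) * c ^ k
      = ∑ k ∈ Finset.range (n + 2), ((n + 2 - k).choose k : ℤ) * c ^ k := by
    rw [Finset.sum_range_succ]
    simp [Nat.choose_eq_zero_of_lt]
  rw [e1, Finset.sum_range_succ']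
  have e2 : ∀ k ∈ Finset.range (n + 1),
      ((n + 2 - (k + 1)).choose (k + 1) : ℤ) * c ^ (k + 1)
      = ((n - k).choose (k + 1) : ℤ) * c ^ (k + 1)
        + ((n - k).choose k : ℤ) * c ^ (k + 1) := by
    intro k hk
    rw [Finset.mem_range] at hk
    have hkn : k ≤ n := Nat.lt_succ_iff.mp hk
    have : n + 2 - (k + 1) = (n - k) + 1 := by omega
    rw [this, Nat.choose_succ_succ']
    push_cast
    ring
  rw [Finset.sum_congr rfl e2, Finset.sum_add_distrib]
  have e3 : ∑ k ∈ Finset.range (n + 1 + 1), ((n + 1 - k).choose k : ℤ) * c ^ k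
      = ∑ k ∈ Finset.range (n + 1), ((n - k).choose (k + 1) : ℤ) * c ^ (k + 1)
        + 1 := by
    rw [Finset.sum_range_succ']
    congr 1
    apply Finset.sum_congr rfl
    intro k hk
    have : n + 1 - (k + 1) = n - k := by omega
    rw [this]
    simp
  have e4 : ∑ k ∈ Finset.range (n + 1), ((n - k).choose k : ℤ) * c ^ (k + 1)
      = c * ∑ k ∈ Finset.range (n + 1), ((n - k).choose k : ℤ) * c ^ k := by
    rw [Finset.mul_sum]
    apply Finset.sum_congr rfl
    intro k _
    ring
  rw [e3, e4]
  simp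
  ring

private lemma key (m : ℕ) (n : ℕ) :
    (2 * (m : ℤ) + 1) * Faux ((m : ℤ) * ((m : ℤ) + 1)) n
    = ((m : ℤ) + 1) ^ (n + 1) - (-(m : ℤ)) ^ (n + 1) := by
  induction n using Nat.strong_induction_on with
  | _ n ih =>
    match n with
    | 0 => simp [Faux]; ring
    | 1 =>
      have : Faux ((m : ℤ) * ((m : ℤ) + 1)) 1 = 1 := by
        simp [Faux, Finset.sum_range_succ]
      rw [this]; ring
    | (n + 2) =>
      rw [Faux_rec, mul_add, ih (n + 1) (by omega), ← mul_assoc,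
        mul_comm (2 * (m : ℤ) + 1) ((m : ℤ) * ((m : ℤ) + 1)), mul_assoc,
        ih n (by omega)]
      ring

theorem stmt17 (m n : ℕ) (hm : 0 < m) (hn : 0 < n) :
    (2 * (m : ℤ) + 1) * ∑ k ∈ Finset.range (n / 2 + 1),
      ((n - k).choose k : ℤ) * (m : ℤ) ^ k * ((m : ℤ) + 1) ^ k
    = ((m : ℤ) + 1) ^ (n + 1) - (-(m : ℤ)) ^ (n + 1) := by
  have hsum : ∑ k ∈ Finset.range (n / 2 + 1),
      ((n - k).choose k : ℤ) * (m : ℤ) ^ k * ((m : ℤ) + 1) ^ k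
      = Faux ((m : ℤ) * ((m : ℤ) + 1)) n := by
    unfold Faux
    have hsub : Finset.range (n / 2 + 1) ⊆ Finset.range (n + 1) :=
      Finset.range_subset_range.mpr (by omega)
    rw [Finset.sum_subset hsub]
    · apply Finset.sum_congr rfl
      intro k _
      rw [mul_pow]
      ring
    · intro k hk hk'
      rw [Finset.mem_range] at hk hk'
      have : (n - k).choose k = 0 := Nat.choose_eq_zero_of_lt (by omega)
      simp [this]
  rw [hsum, key]
end

section
/- For all positive integers m and n with n ≥ 1, ∑_{k=0}^{⌊n/2⌋} (n/(n-k)) C(n-k, k) m^k (m+1)^k = (m+1)^n + (-m)^n. -/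
open Finset

/-- The coefficient `n/(n-k) * C(n-k,k)` as a natural number. -/
def A (n k : ℕ) : ℕ := n * (n - k).choose k / (n - k)

lemma A_zero {n : ℕ} (hn : 0 < n) : A n 0 = 1 := by
  simp [A, Nat.div_self hn]

lemma A_big {n k : ℕ} (h : n < 2 * k) : A n k = 0 := by
  rcases le_or_gt k n with h1 | h1
  · have : n - k < k := by omega
    simp [A, Nat.choose_eq_zero_of_lt this]
  · have hk : (0:ℕ) < k := by omega
    have hnk : n - k = 0 := by omega
    simp [A, hnk, Nat.choose_eq_zero_of_lt hk]

lemma mul_choose_aux (a k : ℕ) (ha : 1 ≤ a) (hk : 1 ≤ k) :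
    a * (a - 1).choose (k - 1) = a.choose k * k := by
  obtain ⟨a, rfl⟩ := Nat.exists_eq_add_of_le ha
  obtain ⟨k, rfl⟩ := Nat.exists_eq_add_of_le hk
  simpa [Nat.add_comm] using Nat.add_one_mul_choose_eq a k

lemma A_eq {n k : ℕ} (hk : 1 ≤ k) (h : 2 * k ≤ n) :
    A n k = (n - k).choose k + (n - k - 1).choose (k - 1) := by
  have ha : 1 ≤ n - k := by omega
  have h1 : (n - k) * (n - k - 1).choose (k - 1) = (n - k).choose k * k :=
    mul_choose_aux _ _ ha hk
  have h2 : n * (n - k).choose k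
      = (n - k) * ((n - k).choose k + (n - k - 1).choose (k - 1)) := by
    calc n * (n - k).choose k
        = ((n - k) + k) * (n - k).choose k := by
          rw [Nat.sub_add_cancel (by omega : k ≤ n)]
      _ = (n - k) * (n - k).choose k + (n - k).choose k * k := by ring
      _ = (n - k) * (n - k).choose k + (n - k) * (n - k - 1).choose (k - 1) := by
          rw [h1]
      _ = (n - k) * ((n - k).choose k + (n - k - 1).choose (k - 1)) := by ring
  rw [A, h2, Nat.mul_div_cancel_left _ (by omega : 0 < n - k)]

lemma A_rec {n k : ℕ} (hn : 1 ≤ n) :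
    A (n+2) (k+1) = A (n+1) (k+1) + A n k := by
  rcases lt_or_ge n (2*k) with h | h
  · rw [A_big (by omega), A_big (by omega), A_big h]
  rcases eq_or_lt_of_le h with h2 | h2
  · -- n = 2k
    have hk : 1 ≤ k := by omega
    obtain ⟨j, rfl⟩ : ∃ j, k = j + 1 := ⟨k - 1, by omega⟩
    rw [A_big (n := n+1) (k := j+1+1) (by omega)]
    rw [A_eq (by omega) (by omega)]
    rw [A_eq hk h]
    have e2 : n + 2 - (j+1+1) - 1 = j + 1 := by omega
    have e1 : n + 2 - (j+1+1) = j + 2 := by omega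
    have e4 : n - (j+1) - 1 = j := by omega
    have e3 : n - (j+1) = j + 1 := by omega
    have e5 : j + 1 + 1 - 1 = j + 1 := by omega
    have e6 : j + 1 - 1 = j := by omega
    rw [e2, e1, e4, e3, e5, e6]
    simp
  · -- 2k + 1 ≤ n
    rcases Nat.eq_zero_or_pos k with rfl | hk
    · obtain ⟨d, rfl⟩ : ∃ d, n = 1 + d := ⟨n - 1, by omega⟩
      rw [A_eq (by omega) (by omega)]
      rw [A_eq (by omega) (by omega)]
      rw [A_zero (by omega)]
      have e2 : 1 + d + 2 - (0+1) - 1 = d + 1 := by omega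
      have e1 : 1 + d + 2 - (0+1) = d + 2 := by omega
      have e4 : 1 + d + 1 - (0+1) - 1 = d := by omega
      have e3 : 1 + d + 1 - (0+1) = d + 1 := by omega
      have e5 : (0:ℕ) + 1 - 1 = 0 := by omega
      rw [e2, e1, e4, e3, e5]
      simp [Nat.choose_one_right]
    · obtain ⟨j, rfl⟩ : ∃ j, k = j + 1 := ⟨k - 1, by omega⟩
      obtain ⟨d, rfl⟩ : ∃ d, n = 2*j + 3 + d := ⟨n - (2*j+3), by omega⟩
      rw [A_eq (by omega) (by omega)]
      rw [A_eq (by omega) (by omega)]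
      rw [A_eq (by omega) (by omega)]
      have e2 : 2*j + 3 + d + 2 - (j+1+1) - 1 = j + d + 2 := by omega
      have e1 : 2*j + 3 + d + 2 - (j+1+1) = j + d + 3 := by omega
      have e4 : 2*j + 3 + d + 1 - (j+1+1) - 1 = j + d + 1 := by omega
      have e3 : 2*j + 3 + d + 1 - (j+1+1) = j + d + 2 := by omega
      have e6 : 2*j + 3 + d - (j+1) - 1 = j + d + 1 := by omega
      have e5 : 2*j + 3 + d - (j+1) = j + d + 2 := by omega
      have e7 : j + 1 + 1 - 1 = j + 1 := by omega
      have e8 : j + 1 - 1 = j := by omega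
      rw [e2, e1, e4, e3, e6, e5, e7, e8]
      have p1 : (j+d+3).choose (j+1+1)
          = (j+d+2).choose (j+1) + (j+d+2).choose (j+1+1) :=
        Nat.choose_succ_succ' (j+d+2) (j+1)
      have p2 : (j+d+2).choose (j+1)
          = (j+d+1).choose j + (j+d+1).choose (j+1) :=
        Nat.choose_succ_succ' (j+d+1) j
      omega

lemma S_rec (x : ℤ) {n : ℕ} (hn : 1 ≤ n) :
    ∑ k ∈ range (n+2+1), (A (n+2) k : ℤ) * x^k
    = ∑ k ∈ range (n+1+1), (A (n+1) k : ℤ) * x^k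
      + x * ∑ k ∈ range (n+1), (A n k : ℤ) * x^k := by
  rw [Finset.sum_range_succ' (fun k => (A (n+2) k : ℤ) * x^k) (n+2),
      Finset.sum_range_succ' (fun k => (A (n+1) k : ℤ) * x^k) (n+1)]
  have e1 : ∀ k ∈ range (n+2), (A (n+2) (k+1) : ℤ) * x^(k+1)
      = (A (n+1) (k+1) : ℤ) * x^(k+1) + x * ((A n k : ℤ) * x^k) := by
    intro k _
    rw [A_rec hn]
    push_cast
    ring
  rw [Finset.sum_congr rfl e1, Finset.sum_add_distrib]
  rw [Finset.sum_range_succ (fun k => (A (n+1) (k+1) : ℤ) * x^(k+1)) (n+1)]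
  rw [A_big (n := n+1) (k := n+2) (by omega)]
  rw [← Finset.mul_sum, Finset.sum_range_succ (fun k => (A n k : ℤ) * x^k) (n+1)]
  rw [A_big (n := n) (k := n+1) (by omega)]
  rw [A_zero (n := n+2) (by omega), A_zero (n := n+1) (by omega)]
  push_cast
  ring

lemma main_lemma (m : ℕ) : ∀ n : ℕ, 1 ≤ n →
    ∑ k ∈ range (n+1), (A n k : ℤ) * ((m:ℤ) * ((m:ℤ)+1))^k
      = ((m:ℤ)+1)^n + (-(m:ℤ))^n := by
  set x : ℤ := (m:ℤ) * ((m:ℤ)+1) with hx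
  suffices h : ∀ n : ℕ,
      (∑ k ∈ range (n+1+1), (A (n+1) k : ℤ) * x^k
        = ((m:ℤ)+1)^(n+1) + (-(m:ℤ))^(n+1)) ∧
      (∑ k ∈ range (n+2+1), (A (n+2) k : ℤ) * x^k
        = ((m:ℤ)+1)^(n+2) + (-(m:ℤ))^(n+2)) by
    intro n hn
    obtain ⟨j, rfl⟩ := Nat.exists_eq_add_of_le hn
    have := (h j).1
    simpa [Nat.add_comm] using this
  intro n
  induction n with
  | zero =>
    constructor
    · rw [Finset.sum_range_succ, Finset.sum_range_succ, Finset.sum_range_zero]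
      have h10 : A 1 0 = 1 := by decide
      have h11 : A 1 1 = 0 := by decide
      rw [h10, h11]
      push_cast
      ring
    · rw [Finset.sum_range_succ, Finset.sum_range_succ, Finset.sum_range_succ,
        Finset.sum_range_zero]
      have h20 : A 2 0 = 1 := by decide
      have h21 : A 2 1 = 2 := by decide
      have h22 : A 2 2 = 0 := by decide
      rw [h20, h21, h22]
      push_cast
      ring
  | succ n ih =>
    refine ⟨ih.2, ?_⟩
    rw [S_rec x (by omega : 1 ≤ n + 1), ih.1, ih.2]
    ring

theorem stmt18 (m n : ℕ) (hm : 0 < m) (hn : 0 < n) :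
    ∑ k ∈ Finset.range (n / 2 + 1),
      ((n * (n - k).choose k / (n - k) : ℕ) : ℤ) * (m : ℤ) ^ k * ((m : ℤ) + 1) ^ k
    = ((m : ℤ) + 1) ^ n + (-(m : ℤ)) ^ n := by
  have step1 : ∑ k ∈ Finset.range (n / 2 + 1),
      ((n * (n - k).choose k / (n - k) : ℕ) : ℤ) * (m : ℤ) ^ k * ((m : ℤ) + 1) ^ k
      = ∑ k ∈ Finset.range (n / 2 + 1), (A n k : ℤ) * ((m:ℤ) * ((m:ℤ)+1))^k := by
    refine Finset.sum_congr rfl fun k _ => ?_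
    rw [mul_pow, A]
    ring
  rw [step1]
  have step2 : ∑ k ∈ Finset.range (n / 2 + 1), (A n k : ℤ) * ((m:ℤ) * ((m:ℤ)+1))^k
      = ∑ k ∈ Finset.range (n + 1), (A n k : ℤ) * ((m:ℤ) * ((m:ℤ)+1))^k := by
    refine Finset.sum_subset (Finset.range_subset_range.2 (by omega)) fun k hk hk2 => ?_
    simp only [Finset.mem_range] at hk hk2
    rw [A_big (by omega)]
    simp
  rw [step2]
  exact main_lemma m n hn
end

section
/- For a positive integer n and 0 ≤ k ≤ ⌊n/2⌋, the number of k-element subsets of the cyclic group ℤ_n containing no two cyclically consecutive elements equals (n/(n-k))·C(n-k, k). -/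
open Finset

def pset (m k : ℕ) : Finset (Finset ℕ) :=
  ((Finset.range m).powersetCard k).filter (fun A => ∀ a ∈ A, a + 1 ∉ A)

lemma mem_pset {m k : ℕ} {A : Finset ℕ} :
    A ∈ pset m k ↔ A ⊆ Finset.range m ∧ A.card = k ∧ ∀ a ∈ A, a + 1 ∉ A := by
  simp [pset, Finset.mem_powersetCard, and_assoc]

lemma pset_zero {m : ℕ} : pset m 0 = {∅} := by
  ext A
  rw [mem_pset, Finset.mem_singleton]
  constructor
  · rintro ⟨_, h, _⟩; exact Finset.card_eq_zero.mp h
  · rintro rfl; simp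

lemma pset_empty_of_big {m k : ℕ} (h : m < k) : pset m k = ∅ := by
  rw [Finset.eq_empty_iff_forall_notMem]
  intro A hA
  rw [mem_pset] at hA
  obtain ⟨h1, h2, _⟩ := hA
  have := Finset.card_le_card h1
  simp at this; omega

lemma psplit (m k : ℕ) :
    (pset (m+2) (k+1)).card = (pset (m+1) (k+1)).card + (pset m k).card := by
  have himg : ∀ B ∈ pset m k, m + 1 ∉ B := by
    intro B hB
    rw [mem_pset] at hB
    intro hm
    have := hB.1 hm
    simp at this
  have hun : pset (m+2) (k+1) = pset (m+1) (k+1) ∪ (pset m k).image (insert (m+1)) := by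
    ext A
    simp only [Finset.mem_union, Finset.mem_image, mem_pset]
    constructor
    · rintro ⟨h1, h2, h3⟩
      by_cases hm : m + 1 ∈ A
      · right
        refine ⟨A.erase (m+1), ⟨?_, ?_, ?_⟩, ?_⟩
        · intro a ha
          have haA := Finset.mem_of_mem_erase ha
          have hne := Finset.ne_of_mem_erase ha
          have := h1 haA
          simp only [Finset.mem_range] at this ⊢
          rcases Nat.lt_or_ge a m with h | h
          · exact h
          · exfalso
            have ham : a = m := by omega
            subst ham
            exact h3 a haA hm
        · rw [Finset.card_erase_of_mem hm, h2]; rfl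
        · intro a ha
          exact fun hc => h3 a (Finset.mem_of_mem_erase ha) (Finset.mem_of_mem_erase hc)
        · exact Finset.insert_erase hm
      · left
        refine ⟨?_, h2, h3⟩
        intro a ha
        have := h1 ha
        simp only [Finset.mem_range] at this ⊢
        rcases Nat.lt_or_ge a (m+1) with h | h
        · exact h
        · exfalso; have : a = m + 1 := by omega
          subst this; exact hm ha
    · rintro (⟨h1, h2, h3⟩ | ⟨B, hB, rfl⟩)
      · exact ⟨h1.trans (Finset.range_subset_range.mpr (by omega)), h2, h3⟩
      · obtain ⟨h1, h2, h3⟩ := hB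
        have hmB : m + 1 ∉ B := himg B (mem_pset.mpr ⟨h1, h2, h3⟩)
        refine ⟨?_, ?_, ?_⟩
        · intro a ha
          simp only [Finset.mem_insert] at ha
          rcases ha with rfl | ha
          · simp
          · have := h1 ha; simp only [Finset.mem_range] at this ⊢; omega
        · rw [Finset.card_insert_of_notMem hmB, h2]
        · intro a ha
          simp only [Finset.mem_insert] at ha ⊢
          push_neg
          rcases ha with rfl | ha
          · constructor
            · omega
            · intro hc; have := h1 hc; simp at this; omega
          · have hr := h1 ha
            simp only [Finset.mem_range] at hr
            exact ⟨by omega, h3 a ha⟩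
  have hdisj : Disjoint (pset (m+1) (k+1)) ((pset m k).image (insert (m+1))) := by
    rw [Finset.disjoint_left]
    intro A hA hA'
    rw [mem_pset] at hA
    simp only [Finset.mem_image] at hA'
    obtain ⟨B, hB, rfl⟩ := hA'
    have := hA.1 (Finset.mem_insert_self (m+1) B)
    simp at this
  rw [hun, Finset.card_union_of_disjoint hdisj, Finset.card_image_of_injOn]
  intro B hB C hC h
  have hmB := himg B hB
  have hmC := himg C hC
  have := congrArg (fun S => Finset.erase S (m+1)) h
  simpa [Finset.erase_insert hmB, Finset.erase_insert hmC] using this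

lemma pcard (m : ℕ) : ∀ k, (pset m k).card = (m + 1 - k).choose k := by
  induction m using Nat.strong_induction_on with
  | _ m ih =>
    intro k
    match m, k with
    | m, 0 => rw [pset_zero]; simp
    | 0, (k+1) =>
      rw [pset_empty_of_big (by omega), Finset.card_empty,
        Nat.choose_eq_zero_of_lt (by omega)]
    | 1, (k+1) =>
      rcases Nat.eq_zero_or_pos k with rfl | hk
      · have : pset 1 1 = {{0}} := by
          ext A
          rw [mem_pset, Finset.mem_singleton]
          constructor
          · rintro ⟨h1, h2, _⟩
            obtain ⟨a, rfl⟩ := Finset.card_eq_one.mp h2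
            have := h1 (Finset.mem_singleton_self a)
            simp at this; subst this; rfl
          · rintro rfl; refine ⟨by simp, by simp, by simp⟩
        rw [this]; simp
      · rw [pset_empty_of_big (by omega), Finset.card_empty,
          Nat.choose_eq_zero_of_lt (by omega)]
    | (m+2), (k+1) =>
      have key := psplit m k
      rw [key, ih (m+1) (by omega) (k+1), ih m (by omega) k]
      rcases le_or_gt k (m+1) with h | h
      · have h1 : m + 2 + 1 - (k+1) = (m + 1 - k) + 1 := by omega
        have h2 : m + 1 + 1 - (k+1) = m + 1 - k := by omega
        rw [h1, h2, Nat.choose_succ_succ]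
        simp only [Nat.succ_eq_add_one]
        omega
      · have e0 : m + 2 + 1 - (k+1) = m + 2 - k := by omega
        rw [e0, Nat.choose_eq_zero_of_lt (by omega),
          Nat.choose_eq_zero_of_lt (by omega), Nat.choose_eq_zero_of_lt (by omega)]

def cset (n k : ℕ) : Finset (Finset ℕ) :=
  ((Finset.range n).powersetCard k).filter (fun A => ∀ a ∈ A, (a + 1) % n ∉ A)

lemma mem_cset {n k : ℕ} {A : Finset ℕ} :
    A ∈ cset n k ↔ A ⊆ Finset.range n ∧ A.card = k ∧ ∀ a ∈ A, (a + 1) % n ∉ A := by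
  simp [cset, Finset.mem_powersetCard, and_assoc]

-- subsets not containing 0
lemma c0card (n k : ℕ) (hn : 2 ≤ n) :
    ((cset n k).filter (fun A => 0 ∉ A)).card = (pset (n-1) k).card := by
  refine Finset.card_bij' (fun A _ => A.image (· - 1)) (fun B _ => B.image (· + 1))
    ?_ ?_ ?_ ?_
  · -- hi
    intro A hA
    simp only [Finset.mem_filter, mem_cset] at hA
    obtain ⟨⟨h1, h2, h3⟩, h0⟩ := hA
    have hpos : ∀ a ∈ A, 1 ≤ a ∧ a < n := by
      intro a ha
      have := h1 ha
      simp only [Finset.mem_range] at this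
      refine ⟨?_, this⟩
      rcases Nat.eq_zero_or_pos a with rfl | h
      · exact absurd ha h0
      · exact h
    rw [mem_pset]
    refine ⟨?_, ?_, ?_⟩
    · intro b hb
      simp only [Finset.mem_image] at hb
      obtain ⟨a, ha, rfl⟩ := hb
      have := hpos a ha
      simp only [Finset.mem_range]; omega
    · rw [Finset.card_image_of_injOn, h2]
      intro a ha b hb hab
      dsimp only at hab
      have := hpos a ha; have := hpos b hb; omega
    · intro b hb hb1
      simp only [Finset.mem_image] at hb hb1
      obtain ⟨a, ha, rfl⟩ := hb
      obtain ⟨a', ha', he⟩ := hb1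
      have p1 := hpos a ha
      have p2 := hpos a' ha'
      have : a' = a + 1 := by omega
      subst this
      have : (a + 1) % n = a + 1 := Nat.mod_eq_of_lt p2.2
      exact h3 a ha (by rw [this]; exact ha')
  · -- hj
    intro B hB
    rw [mem_pset] at hB
    obtain ⟨h1, h2, h3⟩ := hB
    have hlt : ∀ b ∈ B, b < n - 1 := by
      intro b hb; have := h1 hb; simpa using this
    simp only [Finset.mem_filter, mem_cset]
    refine ⟨⟨?_, ?_, ?_⟩, ?_⟩
    · intro a ha
      simp only [Finset.mem_image] at ha
      obtain ⟨b, hb, rfl⟩ := ha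
      have := hlt b hb
      simp only [Finset.mem_range]; omega
    · rw [Finset.card_image_of_injOn, h2]
      intro a _ b _ hab; dsimp only at hab; omega
    · intro a ha hc
      simp only [Finset.mem_image] at ha hc
      obtain ⟨b, hb, rfl⟩ := ha
      obtain ⟨b', hb', he⟩ := hc
      have l1 := hlt b hb
      have l2 := hlt b' hb'
      have hm : (b + 1 + 1) % n = b + 2 ∨ (b + 1 + 1) % n = 0 := by
        rcases Nat.lt_or_ge (b + 2) n with h | h
        · left; exact Nat.mod_eq_of_lt h
        · right; have : b + 2 = n := by omega
          rw [this, Nat.mod_self]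
      rcases hm with hm | hm
      · rw [hm] at he
        have : b' = b + 1 := by omega
        subst this
        exact h3 b hb hb'
      · rw [hm] at he; omega
    · intro hc
      simp only [Finset.mem_image] at hc
      obtain ⟨b, _, he⟩ := hc
      omega
  · -- left inv
    intro A hA
    simp only [Finset.mem_filter, mem_cset] at hA
    obtain ⟨⟨h1, _, _⟩, h0⟩ := hA
    rw [Finset.image_image]
    ext x
    simp only [Finset.mem_image, Function.comp_apply]
    constructor
    · rintro ⟨a, ha, rfl⟩
      have hx : a ≠ 0 := fun h => h0 (h ▸ ha)
      have : a - 1 + 1 = a := by omega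
      rwa [this]
    · intro hx
      have h0x : x ≠ 0 := fun h => h0 (h ▸ hx)
      exact ⟨x, hx, by omega⟩
  · -- right inv
    intro B _
    rw [Finset.image_image]
    ext x
    simp only [Finset.mem_image, Function.comp_apply, Nat.add_sub_cancel]
    constructor
    · rintro ⟨b, hb, rfl⟩; exact hb
    · intro hx; exact ⟨x, hx, rfl⟩

-- subsets containing 0
lemma c1card (n k : ℕ) (hn : 2 ≤ n) (hk1 : 1 ≤ k) :
    ((cset n k).filter (fun A => 0 ∈ A)).card = (pset (n-3) (k-1)).card := by
  refine Finset.card_bij' (fun A _ => (A.erase 0).image (· - 2))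
    (fun B _ => insert 0 (B.image (· + 2))) ?_ ?_ ?_ ?_
  · -- hi
    intro A hA
    simp only [Finset.mem_filter, mem_cset] at hA
    obtain ⟨⟨h1, h2, h3⟩, h0⟩ := hA
    have hone : 1 ∉ A := by
      have := h3 0 h0
      rwa [Nat.zero_add, Nat.mod_eq_of_lt (by omega)] at this
    have hlast : n - 1 ∉ A := by
      intro hc
      have := h3 (n-1) hc
      rw [show n - 1 + 1 = n by omega, Nat.mod_self] at this
      exact this h0
    have hbound : ∀ a ∈ A.erase 0, 2 ≤ a ∧ a ≤ n - 2 := by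
      intro a ha
      have haA := Finset.mem_of_mem_erase ha
      have hne := Finset.ne_of_mem_erase ha
      have hr := h1 haA
      simp only [Finset.mem_range] at hr
      have h1a : a ≠ 1 := fun h => hone (h ▸ haA)
      have h2a : a ≠ n - 1 := fun h => hlast (h ▸ haA)
      omega
    rw [mem_pset]
    refine ⟨?_, ?_, ?_⟩
    · intro b hb
      simp only [Finset.mem_image] at hb
      obtain ⟨a, ha, rfl⟩ := hb
      have := hbound a ha
      simp only [Finset.mem_range]; omega
    · rw [Finset.card_image_of_injOn, Finset.card_erase_of_mem h0, h2]
      intro a ha b hb hab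
      dsimp only at hab
      have := hbound a ha; have := hbound b hb; omega
    · intro b hb hc
      simp only [Finset.mem_image] at hb hc
      obtain ⟨a, ha, rfl⟩ := hb
      obtain ⟨a', ha', he⟩ := hc
      have p1 := hbound a ha
      have p2 := hbound a' ha'
      have : a' = a + 1 := by omega
      subst this
      have haA := Finset.mem_of_mem_erase ha
      have := h3 a haA
      rw [Nat.mod_eq_of_lt (by omega)] at this
      exact this (Finset.mem_of_mem_erase ha')
  · -- hj
    intro B hB
    rw [mem_pset] at hB
    obtain ⟨h1, h2, h3⟩ := hB
    have hlt : ∀ b ∈ B, b < n - 3 := by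
      intro b hb; have := h1 hb; simpa using this
    have h0img : (0:ℕ) ∉ B.image (· + 2) := by
      simp only [Finset.mem_image]
      rintro ⟨b, _, hb⟩; omega
    simp only [Finset.mem_filter, mem_cset]
    refine ⟨⟨?_, ?_, ?_⟩, Finset.mem_insert_self 0 _⟩
    · intro a ha
      simp only [Finset.mem_insert, Finset.mem_image] at ha
      simp only [Finset.mem_range]
      rcases ha with rfl | ⟨b, hb, rfl⟩
      · omega
      · have := hlt b hb; omega
    · rw [Finset.card_insert_of_notMem h0img, Finset.card_image_of_injOn, h2]
      · omega
      · intro a _ b _ hab; dsimp only at hab; omega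
    · intro a ha hc
      simp only [Finset.mem_insert, Finset.mem_image] at ha hc
      rcases ha with rfl | ⟨b, hb, rfl⟩
      · rw [Nat.zero_add, Nat.mod_eq_of_lt (by omega)] at hc
        rcases hc with h | ⟨b, _, hb⟩
        · omega
        · omega
      · have hbn := hlt b hb
        rw [Nat.mod_eq_of_lt (by omega)] at hc
        rcases hc with h | ⟨b', hb', he⟩
        · omega
        · have : b' = b + 1 := by omega
          subst this
          exact h3 b hb hb'
  · -- left inv
    intro A hA
    simp only [Finset.mem_filter, mem_cset] at hA
    obtain ⟨⟨h1, h2, h3⟩, h0⟩ := hA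
    have hone : 1 ∉ A := by
      have := h3 0 h0
      rwa [Nat.zero_add, Nat.mod_eq_of_lt (by omega)] at this
    have hbound : ∀ a ∈ A.erase 0, 2 ≤ a := by
      intro a ha
      have haA := Finset.mem_of_mem_erase ha
      have hne := Finset.ne_of_mem_erase ha
      have h1a : a ≠ 1 := fun h => hone (h ▸ haA)
      omega
    rw [Finset.image_image]
    have : Finset.image ((· + 2) ∘ (· - 2)) (A.erase 0) = A.erase 0 := by
      ext x
      simp only [Finset.mem_image, Function.comp_apply]
      constructor
      · rintro ⟨a, ha, rfl⟩
        have := hbound a ha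
        have : a - 2 + 2 = a := by omega
        rwa [this]
      · intro hx
        exact ⟨x, hx, by have := hbound x hx; omega⟩
    rw [this, Finset.insert_erase h0]
  · -- right inv
    intro B hB
    rw [mem_pset] at hB
    obtain ⟨h1, _, _⟩ := hB
    have h0img : (0:ℕ) ∉ B.image (· + 2) := by
      simp only [Finset.mem_image]
      rintro ⟨b, _, hb⟩; omega
    rw [Finset.erase_insert h0img, Finset.image_image]
    ext x
    simp only [Finset.mem_image, Function.comp_apply, Nat.add_sub_cancel]
    constructor
    · rintro ⟨b, hb, rfl⟩; exact hb
    · intro hx; exact ⟨x, hx, rfl⟩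

lemma zcard (n k : ℕ) [NeZero n] (hn : 2 ≤ n) :
    (Finset.univ.filter
        (fun A : Finset (ZMod n) => A.card = k ∧ ∀ a ∈ A, a + 1 ∉ A)).card
      = (cset n k).card := by
  have hval : ∀ a : ZMod n, ((a.val : ZMod n)) = a := fun a => ZMod.natCast_rightInverse a
  have hfact : Fact (1 < n) := ⟨hn⟩
  have hvadd : ∀ a : ZMod n, (a + 1).val = (a.val + 1) % n := by
    intro a
    rw [ZMod.val_add, ZMod.val_one]
  refine Finset.card_bij' (fun A _ => A.image ZMod.val)
    (fun B _ => B.image (Nat.cast : ℕ → ZMod n)) ?_ ?_ ?_ ?_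
  · -- hi
    intro A hA
    simp only [Finset.mem_filter, Finset.mem_univ, true_and] at hA
    obtain ⟨h2, h3⟩ := hA
    rw [mem_cset]
    refine ⟨?_, ?_, ?_⟩
    · intro b hb
      simp only [Finset.mem_image] at hb
      obtain ⟨a, _, rfl⟩ := hb
      simp only [Finset.mem_range]
      exact ZMod.val_lt a
    · rw [Finset.card_image_of_injOn (ZMod.val_injective n).injOn, h2]
    · intro b hb hc
      simp only [Finset.mem_image] at hb hc
      obtain ⟨a, ha, rfl⟩ := hb
      obtain ⟨a', ha', he⟩ := hc
      have : a' = a + 1 := by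
        apply ZMod.val_injective
        rw [he, hvadd]
      subst this
      exact h3 a ha ha'
  · -- hj
    intro B hB
    rw [mem_cset] at hB
    obtain ⟨h1, h2, h3⟩ := hB
    have hlt : ∀ b ∈ B, b < n := by
      intro b hb; have := h1 hb; simpa using this
    simp only [Finset.mem_filter, Finset.mem_univ, true_and]
    constructor
    · rw [Finset.card_image_of_injOn, h2]
      intro a ha b hb hab
      have : ((a : ZMod n)).val = ((b : ZMod n)).val := by rw [hab]
      rwa [ZMod.val_cast_of_lt (hlt a ha), ZMod.val_cast_of_lt (hlt b hb)] at this
    · intro a ha hc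
      simp only [Finset.mem_image] at ha hc
      obtain ⟨b, hb, rfl⟩ := ha
      obtain ⟨b', hb', he⟩ := hc
      have : b' = (b + 1) % n := by
        have := congrArg ZMod.val he
        rwa [ZMod.val_cast_of_lt (hlt b' hb'), hvadd, ZMod.val_cast_of_lt (hlt b hb)] at this
      subst this
      exact h3 b hb hb'
  · -- left inv
    intro A _
    rw [Finset.image_image]
    ext x
    simp only [Finset.mem_image, Function.comp_apply]
    constructor
    · rintro ⟨a, ha, rfl⟩; rwa [hval]
    · intro hx; exact ⟨x, hx, hval x⟩
  · -- right inv
    intro B hB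
    rw [mem_cset] at hB
    have hlt : ∀ b ∈ B, b < n := by
      intro b hb; have := hB.1 hb; simpa using this
    rw [Finset.image_image]
    ext x
    simp only [Finset.mem_image, Function.comp_apply]
    constructor
    · rintro ⟨b, hb, rfl⟩
      rwa [ZMod.val_cast_of_lt (hlt b hb)]
    · intro hx
      exact ⟨x, hx, ZMod.val_cast_of_lt (hlt x hx)⟩


theorem stmt19 (n k : ℕ) [NeZero n] (hk : k ≤ n / 2) :
    (Finset.univ.filter
        (fun A : Finset (ZMod n) => A.card = k ∧ ∀ a ∈ A, a + 1 ∉ A)).card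
    = n * (n - k).choose k / (n - k) := by
  have hnpos : 0 < n := Nat.pos_of_ne_zero (NeZero.ne n)
  rcases Nat.eq_zero_or_pos k with rfl | hk1
  · have hset : (Finset.univ.filter
        (fun A : Finset (ZMod n) => A.card = 0 ∧ ∀ a ∈ A, a + 1 ∉ A)) = {∅} := by
      ext A
      simp only [Finset.mem_filter, Finset.mem_univ, true_and, Finset.mem_singleton,
        Finset.card_eq_zero]
      constructor
      · rintro ⟨rfl, _⟩; rfl
      · rintro rfl; simp
    rw [hset]
    simp [Nat.div_self hnpos]
  · have hn2 : 2 ≤ n := by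
      rcases Nat.lt_or_ge n 2 with h | h
      · interval_cases n <;> omega
      · exact h
    rw [zcard n k hn2]
    have hsplit := Finset.card_filter_add_card_filter_not
      (s := cset n k) (p := fun A => 0 ∈ A)
    have hcset : (cset n k).card
        = ((cset n k).filter (fun A => 0 ∉ A)).card
          + ((cset n k).filter (fun A => 0 ∈ A)).card := by
      omega
    rw [hcset, c0card n k hn2, c1card n k hn2 hk1, pcard, pcard]
    have hkn : k < n := by omega
    have hknk : k ≤ n - k := by omega
    have e1 : n - 1 + 1 - k = n - k := by omega
    rcases Nat.lt_or_ge n 3 with h3 | h3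
    · -- n = 2, k = 1
      have hn : n = 2 := by omega
      have hkk : k = 1 := by
        subst hn; omega
      subst hn; subst hkk
      decide
    · have e2 : n - 3 + 1 - (k - 1) = n - k - 1 := by omega
      rw [e1, e2]
      set A := (n - k).choose k with hA
      set B := (n - k - 1).choose (k - 1) with hB
      have h1 : n - k - 1 + 1 = n - k := by omega
      have h2 : k - 1 + 1 = k := by omega
      have key := Nat.add_one_mul_choose_eq (n - k - 1) (k - 1)
      rw [h1, h2, ← hA, ← hB] at key
      -- key : (n - k) * B = A * k
      have hmul : n * A = (A + B) * (n - k) := by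
        have hn' : n = (n - k) + k := by omega
        calc n * A = ((n - k) + k) * A := by rw [← hn']
          _ = (n - k) * A + A * k := by ring
          _ = (n - k) * A + (n - k) * B := by rw [key]
          _ = (A + B) * (n - k) := by ring
      symm
      exact Nat.div_eq_of_eq_mul_left (by omega) hmul
end
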